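/- Let G be a countable group that has only countably many finite index subgroups. Let G₀ ≤ G be a finite index subgroup and let G₀ᵃᵇ = G₀/[G₀,G₀] denote its abelianization, written additively. Then for every integer n ≥ 1, the subgroup n·G₀ᵃᵇ = {n·x : x ∈ G₀ᵃᵇ} has finite index in G₀ᵃᵇ. -/

import Mathlib

open Function
open scoped Classical

lemma uncountable_fun {κ : Type*} [Infinite κ] {F : Type*} (a b : F) (hab : a ≠ b) :
    ¬ Countable (κ → F) := by
  intro h
  have hinj : Injective (fun S : Set κ => fun i => if i ∈ S then a else b) := by
    intro S T h'
    ext i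
    have := congrFun h' i
    by_cases hi : i ∈ S <;> by_cases hj : i ∈ T <;> simp_all
  haveI : Countable (Set κ) := hinj.countable
  have h1 : (Cardinal.mk (Set κ)) ≤ Cardinal.aleph0 := Cardinal.mk_le_aleph0
  have h2 : Cardinal.aleph0 ≤ Cardinal.mk κ := Cardinal.aleph0_le_mk κ
  have h3 : Cardinal.mk κ < Cardinal.mk (Set κ) := by
    rw [Cardinal.mk_set]; exact Cardinal.cantor _
  exact absurd (h3.trans_le h1) (not_lt.mpr h2)

lemma vspace_uncountable (p : ℕ) [Fact p.Prime] (V : Type*) [AddCommGroup V]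
    [Module (ZMod p) V] [Infinite V] :
    ¬ Countable {H : AddSubgroup V // H.FiniteIndex} := by
  intro hcnt
  obtain ⟨b⟩ : Nonempty (Module.Basis (Module.Basis.ofVectorSpaceIndex (ZMod p) V) (ZMod p) V) :=
    ⟨Module.Basis.ofVectorSpace (ZMod p) V⟩
  set ι := Module.Basis.ofVectorSpaceIndex (ZMod p) V
  haveI : Infinite ι := by
    by_contra hfin
    haveI : Finite ι := not_infinite_iff_finite.mp hfin
    haveI : Finite (ι →₀ ZMod p) := Finite.of_equiv _ (Finsupp.equivFunOnFinite).symm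
    exact not_finite_iff_infinite.mpr ‹Infinite V› (Finite.of_equiv _ b.repr.toEquiv.symm)
  obtain ⟨i₀⟩ : Nonempty ι := inferInstance
  let Φ : (ι → ZMod p) → (V →ₗ[ZMod p] ZMod p) := fun f => b.constr ℕ f
  have key : ∀ f : ι → ZMod p, ((Φ f).toAddMonoidHom.ker).FiniteIndex := by
    intro f
    have : Finite (V ⧸ (Φ f).toAddMonoidHom.ker) :=
      Finite.of_injective _ (QuotientAddGroup.kerLift_injective (Φ f).toAddMonoidHom)
    exact AddSubgroup.finiteIndex_of_finite_quotient
  have inj : Injective (fun f : {f : ι → ZMod p // f i₀ = 1} =>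
      (⟨(Φ f.1).toAddMonoidHom.ker, key f.1⟩ : {H : AddSubgroup V // H.FiniteIndex})) := by
    rintro ⟨f, hf⟩ ⟨g, hg⟩ h
    simp only [Subtype.mk.injEq] at h ⊢
    funext i
    have hv' : (b i - f i • b i₀) ∈ (Φ f).toAddMonoidHom.ker := by
      show Φ f (b i - f i • b i₀) = 0
      simp [Φ, map_sub, map_smul, Module.Basis.constr_basis, hf, smul_eq_mul]
    rw [h] at hv'
    have hg' : Φ g (b i - f i • b i₀) = 0 := hv'
    simp only [Φ, map_sub, map_smul, Module.Basis.constr_basis, hg, smul_eq_mul, mul_one,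
      sub_eq_zero] at hg'
    exact hg'.symm
  haveI : Countable {f : ι → ZMod p // f i₀ = 1} := inj.countable
  -- derive countability of all functions on the complement, contradiction
  have hinj2 : Injective (fun g : {i : ι // i ≠ i₀} → ZMod p =>
      (⟨fun i => if h : i = i₀ then 1 else g ⟨i, h⟩, by simp⟩ :
        {f : ι → ZMod p // f i₀ = 1})) := by
    intro g₁ g₂ h
    funext j
    have := congrFun (congrArg Subtype.val h) j.1
    simpa [j.2] using this
  haveI : Countable ({i : ι // i ≠ i₀} → ZMod p) := hinj2.countable
  haveI : Infinite {i : ι // i ≠ i₀} := by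
    apply Set.infinite_coe_iff.mpr
    exact Set.Finite.infinite_compl (Set.finite_singleton i₀)
  exact uncountable_fun (0 : ZMod p) 1 (by
    haveI : Fact (1 < p) := ⟨(Fact.out : p.Prime).one_lt⟩
    exact zero_ne_one) ‹_›

-- transfer countability along a surjection (comap)
lemma countable_comap {P Q : Type*} [Group P] [Group Q] (φ : P →* Q)
    (hφ : Surjective φ) (h : Countable {H : Subgroup P // H.FiniteIndex}) :
    Countable {H : Subgroup Q // H.FiniteIndex} := by
  have hinj : Injective (fun H : {H : Subgroup Q // H.FiniteIndex} =>
      (⟨H.1.comap φ, ⟨by rw [Subgroup.index_comap_of_surjective _ hφ]; exact H.2.1⟩⟩ :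
        {H : Subgroup P // H.FiniteIndex})) := by
    intro H K h'
    exact Subtype.ext (Subgroup.comap_injective hφ (congrArg Subtype.val h'))
  exact hinj.countable

-- transfer countability to a finite index subgroup
lemma countable_sub {P : Type*} [Group P] (K : Subgroup P) (hK : K.FiniteIndex)
    (h : Countable {H : Subgroup P // H.FiniteIndex}) :
    Countable {H : Subgroup K // H.FiniteIndex} := by
  have hinj : Injective (fun H : {H : Subgroup K // H.FiniteIndex} =>
      (⟨H.1.map K.subtype, ⟨by
        rw [Subgroup.index_map_subtype]
        exact mul_ne_zero H.2.1 hK.1⟩⟩ : {H : Subgroup P // H.FiniteIndex})) := by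
    intro H H' h'
    exact Subtype.ext (Subgroup.map_injective K.subtype_injective (congrArg Subtype.val h'))
  exact hinj.countable

-- exponent p infinite comm group
lemma expP_uncountable (p : ℕ) (hp : p.Prime) (W : Type*) [CommGroup W]
    (hxp : ∀ x : W, x ^ p = 1) [Infinite W] :
    ¬ Countable {H : Subgroup W // H.FiniteIndex} := by
  intro hcnt
  haveI : Fact p.Prime := ⟨hp⟩
  letI : Module (ZMod p) (Additive W) :=
    AddCommGroup.zmodModule (fun x : Additive W => hxp x.toMul)
  haveI : Infinite (Additive W) := ‹Infinite W›
  refine vspace_uncountable p (Additive W) ?_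
  have hinj : Injective (fun H : {H : AddSubgroup (Additive W) // H.FiniteIndex} =>
      (⟨AddSubgroup.toSubgroup' H.1, ⟨H.2.1⟩⟩ : {H : Subgroup W // H.FiniteIndex})) := by
    intro H K h
    apply Subtype.ext
    exact AddSubgroup.toSubgroup'.injective (congrArg Subtype.val h)
  exact hinj.countable

lemma main_uncountable : ∀ (n : ℕ), 0 < n → ∀ (Q : Type u) [CommGroup Q],
    (∀ x : Q, x ^ n = 1) → Infinite Q → ¬ Countable {H : Subgroup Q // H.FiniteIndex} := by
  intro n
  induction n using Nat.strong_induction_on with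
  | _ n ih =>
    intro hn Q _ hx hinf hcnt
    rcases eq_or_lt_of_le (show 1 ≤ n from hn) with h1 | h2
    · -- n = 1
      haveI := hinf
      have : ∀ x : Q, x = 1 := fun x => by simpa [← h1] using hx x
      obtain ⟨a, b, hab⟩ := exists_pair_ne Q
      exact hab (by rw [this a, this b])
    · -- n ≥ 2
      have hn1 : n ≠ 1 := by omega
      set p := n.minFac with hpdef
      have hp : p.Prime := Nat.minFac_prime hn1
      set K := (powMonoidHom p : Q →* Q).range with hKdef
      have hxK : ∀ x : Q, x ^ p ∈ K := fun x => ⟨x, rfl⟩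
      cases finite_or_infinite (Q ⧸ K) with
      | inl hfin =>
        -- K has finite index, is infinite, exponent n/p
        haveI := hfin
        have hKfi : K.FiniteIndex := Subgroup.finiteIndex_of_finite_quotient
        haveI : Infinite K := by
          by_contra hKinf
          haveI : Finite K := not_infinite_iff_finite.mp hKinf
          have : Finite Q :=
            Finite.of_equiv _ (Subgroup.groupEquivQuotientProdSubgroup (s := K)).symm
          exact not_finite_iff_infinite.mpr hinf this
        have hdvd : p ∣ n := Nat.minFac_dvd n
        have hm : 0 < n / p := Nat.div_pos (Nat.le_of_dvd hn hdvd) hp.pos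
        have hlt : n / p < n := Nat.div_lt_self hn hp.one_lt
        have hexp : ∀ y : K, y ^ (n / p) = 1 := by
          rintro ⟨y, x, rfl⟩
          apply Subtype.ext
          show (powMonoidHom p x : Q) ^ (n / p) = 1
          show (x ^ p) ^ (n / p) = 1
          rw [← pow_mul, Nat.mul_div_cancel' hdvd]
          exact hx x
        exact ih (n / p) hlt hm K hexp ‹Infinite K› (countable_sub K hKfi hcnt)
      | inr hinfQK =>
        haveI := hinfQK
        have hexp : ∀ x : Q ⧸ K, x ^ p = 1 := by
          rintro ⟨x⟩
          show ((x : Q ⧸ K)) ^ p = 1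
          have h1 : ((x : Q ⧸ K)) ^ p = ((x ^ p : Q) : Q ⧸ K) :=
            (map_pow (QuotientGroup.mk' K) x p).symm
          rw [h1]
          exact (QuotientGroup.eq_one_iff _).mpr (hxK x)
        exact expP_uncountable p hp (Q ⧸ K) hexp
          (countable_comap (QuotientGroup.mk' K) (QuotientGroup.mk'_surjective K) hcnt)

/-- If `G` is a countable group with only countably many finite index subgroups,
`G₀ ≤ G` has finite index, and `n ≥ 1`, then the subgroup of `n`-th multiples
(i.e. the image of the `n`-th power map) of the abelianization of `G₀`
has finite index in the abelianization of `G₀`. -/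
theorem finiteIndex_nsmul_abelianization
    (G : Type*) [Group G] [Countable G]
    (hcnt : Countable {H : Subgroup G // H.FiniteIndex})
    (G₀ : Subgroup G) (hG₀ : G₀.FiniteIndex) (n : ℕ) (hn : 1 ≤ n) :
    ((powMonoidHom n : Abelianization G₀ →* Abelianization G₀).range).FiniteIndex := by
  set A := Abelianization G₀ with hA
  set N := (powMonoidHom n : A →* A).range with hN
  suffices h : Finite (A ⧸ N) from by haveI := h; exact Subgroup.finiteIndex_of_finite_quotient
  by_contra hfin
  haveI : Infinite (A ⧸ N) := not_finite_iff_infinite.mp hfin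
  have c1 : Countable {H : Subgroup G₀ // H.FiniteIndex} := countable_sub G₀ hG₀ hcnt
  have hsurj : Surjective (Abelianization.of : G₀ →* A) := fun y => by
    rcases QuotientGroup.mk_surjective y with ⟨a, ha⟩
    exact ⟨a, ha⟩
  have c2 : Countable {H : Subgroup A // H.FiniteIndex} :=
    countable_comap Abelianization.of hsurj c1
  have c3 : Countable {H : Subgroup (A ⧸ N) // H.FiniteIndex} :=
    countable_comap (QuotientGroup.mk' N) (QuotientGroup.mk'_surjective N) c2
  have hx : ∀ x : A ⧸ N, x ^ n = 1 := by
    rintro ⟨x⟩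
    show ((x : A ⧸ N)) ^ n = 1
    have h1 : ((x : A ⧸ N)) ^ n = ((x ^ n : A) : A ⧸ N) :=
      (map_pow (QuotientGroup.mk' N) x n).symm
    rw [h1]
    exact (QuotientGroup.eq_one_iff _).mpr ⟨x, rfl⟩
  exact main_uncountable n hn (A ⧸ N) hx ‹_› c3
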